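/- Let P be a parity game in which Player ◇ has a winning strategy from node v. Then Player ◇ has a positional winning strategy from v (positional determinacy restricted to the transfer direction): any winning strategy can be replaced by one whose moves depend only on the current node. -/

import Mathlib

/-- `Hist Vd E σ v l`: `l` is a history (finite path) of the parity game with
◇-nodes `Vd` and edges `E`, starting at `v` and conforming to Player ◇'s
strategy `σ` (a function from histories to moves). -/
inductive Hist {V : Type*} (Vd : Set V) (E : V → V → Prop) (σ : List V → V)
    (v : V) : List V → Prop
  | base : Hist Vd E σ v [v]
  | step {l : List V} {u w : V} : Hist Vd E σ v (l ++ [u]) → E u w →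
      (u ∈ Vd → w = σ (l ++ [u])) → Hist Vd E σ v (l ++ [u] ++ [w])

/-- `σ` is a winning strategy for Player ◇ from `v` in the parity game
`(V, Vd, E, ω)`: every maximal finite conforming play ends in a node where the
opponent is stuck, and every infinite conforming play satisfies the parity
condition (the minimum priority occurring infinitely often is even). -/
def WinningFrom {V : Type*} (Vd : Set V) (E : V → V → Prop) (ω : V → ℕ)
    (σ : List V → V) (v : V) : Prop :=
  (∀ (l : List V) (u : V), Hist Vd E σ v (l ++ [u]) →
    (∀ w, ¬ Hist Vd E σ v (l ++ [u] ++ [w])) → u ∉ Vd) ∧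
  (∀ f : ℕ → V, f 0 = v →
    (∀ n : ℕ, Hist Vd E σ v (List.ofFn fun i : Fin (n + 1) => f i)) →
    ∃ p, Even p ∧ {n | ω (f n) = p}.Infinite ∧
      ∀ q, q < p → {n | ω (f n) = q}.Finite)

namespace PPDAux

universe u

variable {V : Type u} (Vd : Set V) (E : V → V → Prop) (σ : List V → V) (v : V) (ω : V → ℕ)

theorem hist_ne_nil {m : List V} (h : Hist Vd E σ v m) : m ≠ [] := by
  cases h <;> simp

theorem hist_head {m : List V} (h : Hist Vd E σ v m) : m.head? = some v := by
  induction h with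
  | base => rfl
  | step h1 h2 h3 ih =>
    rename_i l u w
    rw [← ih]
    rcases l with _ | ⟨a, l⟩ <;> simp

theorem hist_inv {m : List V} (h : Hist Vd E σ v m) :
    ∀ l u w, m = l ++ [u] ++ [w] →
      Hist Vd E σ v (l ++ [u]) ∧ E u w ∧ (u ∈ Vd → w = σ (l ++ [u])) := by
  cases h with
  | base =>
    intro l u w he
    exfalso
    have := congrArg List.length he
    simp only [List.length_append, List.length_cons, List.length_nil] at this
    omega
  | step h1 h2 h3 =>
    rename_i l1 u1 w1
    intro l u w he
    rw [List.append_assoc, List.append_assoc] at he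
    obtain ⟨h4, h5⟩ := List.append_inj' he (by simp)
    have h6 : u1 = u ∧ w1 = w := by
      have := h5
      simp at this
      exact ⟨this.1, this.2⟩
    obtain ⟨rfl, rfl⟩ := h6
    subst h4
    exact ⟨h1, h2, h3⟩

theorem hist_take {m : List V} (h : Hist Vd E σ v m) :
    ∀ k, k + 1 ≤ m.length → Hist Vd E σ v (m.take (k + 1)) := by
  induction h with
  | base =>
    intro k hk
    simp only [List.length_cons, List.length_nil] at hk
    have hk0 : k = 0 := by omega
    subst hk0
    exact Hist.base
  | step h1 h2 h3 ih =>
    rename_i l u w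
    intro k hk
    rcases Nat.lt_or_ge (k + 1) ((l ++ [u]).length + 1) with hlt | hge
    · have hle : k + 1 ≤ (l ++ [u]).length := by omega
      rw [List.take_append_of_le_length hle]
      exact ih k hle
    · have hlen : k + 1 = (l ++ [u] ++ [w]).length := by
        simp only [List.length_append, List.length_cons, List.length_nil] at hk hge ⊢
        omega
      rw [hlen, List.take_length]
      exact Hist.step h1 h2 h3

def HRel (p : ℕ) (x m' : List V) : Prop :=
  Hist Vd E σ v m' ∧ Hist Vd E σ v x ∧
    ∃ t w', x = m' ++ t ++ [w'] ∧ ω w' = p ∧ ∀ a ∈ t, p ≤ ω a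

theorem hrel_wf (hwin : WinningFrom Vd E ω σ v) {p : ℕ} (hp : ¬ Even p) :
    WellFounded (HRel Vd E σ v ω p) := by
  haveI : IsTrans (List V) (HRel Vd E σ v ω p) := by
    constructor
    rintro x y z ⟨hy, hx, t1, w1, hxe, hw1, ha1⟩ ⟨hz, -, t2, w2, hye, hw2, ha2⟩
    refine ⟨hz, hx, t2 ++ [w2] ++ t1, w1, ?_, hw1, ?_⟩
    · rw [hxe, hye]; simp [List.append_assoc]
    · intro a ha
      simp only [List.mem_append, List.mem_cons, List.not_mem_nil, or_false] at ha
      rcases ha with (ha | ha) | ha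
      · exact ha2 a ha
      · rw [ha, hw2]
      · exact ha1 a ha
  haveI : IsIrrefl (List V) (HRel Vd E σ v ω p) := by
    constructor
    rintro x ⟨-, -, t1, w1, hxe, -, -⟩
    have := congrArg List.length hxe
    simp only [List.length_append, List.length_cons, List.length_nil] at this
    omega
  haveI : IsStrictOrder (List V) (HRel Vd E σ v ω p) := ⟨⟩
  rw [RelEmbedding.wellFounded_iff_isEmpty]
  constructor
  intro emb
  set g : ℕ → List V := fun n => emb n with hgdef
  have hstep : ∀ n : ℕ, HRel Vd E σ v ω p (g (n + 1)) (g n) :=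
    fun n => emb.map_rel_iff.2 (Nat.lt_succ_self n)
  have hgh : ∀ n, Hist Vd E σ v (g n) := fun n => (hstep n).1
  choose t w' heq hw hall using fun n => (hstep n).2.2
  have hlen : ∀ n, n + 1 ≤ (g n).length := by
    intro n
    induction n with
    | zero => exact List.length_pos_iff.2 (hist_ne_nil Vd E σ v (hgh 0))
    | succ n ih =>
      rw [heq n]
      simp only [List.length_append, List.length_cons, List.length_nil]
      omega
  have hpre : ∀ n m', n ≤ m' → g n <+: g m' := by
    intro n m' hnm
    induction m', hnm using Nat.le_induction with
    | base => exact List.prefix_refl _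
    | succ m' hm ih =>
      refine ih.trans ⟨t m' ++ [w' m'], ?_⟩
      rw [heq m', List.append_assoc]
  set F : ℕ → V := fun k => (g k).getD k v with hF
  have hpreD : ∀ (l1 l2 : List V) (k : ℕ), l1 <+: l2 → k < l1.length →
      l1.getD k v = l2.getD k v := by
    rintro l1 l2 k ⟨r, rfl⟩ hk
    rw [List.getD_eq_getElem _ _ hk,
      List.getD_eq_getElem _ _ (by rw [List.length_append]; omega)]
    exact (List.getElem_append_left hk).symm
  have hFeq : ∀ (k n : ℕ), k < (g n).length → F k = (g n).getD k v := by
    intro k n hk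
    have hkk : k < (g k).length := by have := hlen k; omega
    rcases Nat.le_total k n with h | h
    · exact hpreD (g k) (g n) k (hpre k n h) hkk
    · exact (hpreD (g n) (g k) k (hpre n k h) hk).symm
  have hF0 : F 0 = v := by
    have h0 := hist_head Vd E σ v (hgh 0)
    rcases hg0 : g 0 with _ | ⟨a, l0⟩
    · rw [hg0] at h0; simp at h0
    · rw [hg0] at h0
      simp only [List.head?_cons, Option.some.injEq] at h0
      rw [hF]; simp only; rw [hg0]
      simpa using h0
  have hofn : ∀ n, (List.ofFn fun i : Fin (n + 1) => F i) = (g n).take (n + 1) := by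
    intro n
    apply List.ext_getElem
    · simp only [List.length_ofFn, List.length_take]
      have := hlen n; omega
    · intro i h1 h2
      simp only [List.getElem_ofFn, List.getElem_take]
      have hi : i < (g n).length := by
        simp only [List.length_take] at h2; omega
      rw [hFeq i n hi, List.getD_eq_getElem _ _ hi]
  have hhist : ∀ n : ℕ, Hist Vd E σ v (List.ofFn fun i : Fin (n + 1) => F i) := by
    intro n
    rw [hofn n]
    exact hist_take Vd E σ v (hgh n) n (hlen n)
  obtain ⟨p₀, hp₀e, hp₀i, hp₀f⟩ := hwin.2 F hF0 hhist
  have hhigh : ∀ k, (g 0).length ≤ k → p ≤ ω (F k) := by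
    intro k hk
    have hQ : ∃ n, k < (g n).length := ⟨k + 1, by have := hlen (k + 1); omega⟩
    have hn₀ : k < (g (Nat.find hQ)).length := Nat.find_spec hQ
    have hpos : Nat.find hQ ≠ 0 := by
      intro h0; rw [h0] at hn₀; omega
    set n := Nat.find hQ - 1 with hn
    have hsucc : Nat.find hQ = n + 1 := by omega
    have hle : (g n).length ≤ k := by
      have := Nat.find_min hQ (m := n) (by omega)
      omega
    rw [hsucc] at hn₀
    have hFk : F k = (g (n + 1)).getD k v := hFeq k (n + 1) hn₀
    rw [heq n, List.append_assoc] at hFk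
    rw [List.getD_append_right _ _ _ _ hle] at hFk
    have hklt : k - (g n).length < (t n ++ [w' n]).length := by
      rw [heq n, List.append_assoc, List.length_append] at hn₀
      omega
    rw [List.getD_eq_getElem _ _ hklt] at hFk
    have hmem : F k ∈ t n ++ [w' n] := hFk ▸ List.getElem_mem hklt
    rcases List.mem_append.1 hmem with hm | hm
    · exact hall n _ hm
    · simp only [List.mem_cons, List.not_mem_nil, or_false] at hm
      rw [hm, hw n]
  have hinf : {k | ω (F k) = p}.Infinite := by
    have hgl : StrictMono fun n => (g n).length := by
      apply strictMono_nat_of_lt_succ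
      intro m'
      show (g m').length < (g (m' + 1)).length
      rw [heq m']
      simp only [List.length_append, List.length_cons, List.length_nil]
      omega
    set idx : ℕ → ℕ := fun n => (g (n + 1)).length - 1 with hidx
    have hmono : StrictMono idx := by
      intro a b hab
      have h1 : (g (a + 1)).length < (g (b + 1)).length := hgl (Nat.succ_lt_succ hab)
      have h2 := hlen (a + 1)
      simp only [hidx]
      omega
    apply Set.infinite_of_injective_forall_mem hmono.injective
    intro n
    show ω (F (idx n)) = p
    have hkl : idx n < (g (n + 1)).length := by
      have := hlen (n + 1); simp only [hidx]; omega
    have hFk : F (idx n) = (g (n + 1)).getD (idx n) v := hFeq _ _ hkl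
    have hlen2 : (g (n + 1)).length = (g n ++ t n).length + 1 := by
      rw [heq n]
      simp only [List.length_append, List.length_cons, List.length_nil]
    have hidxeq : idx n = (g n ++ t n).length := by
      simp only [hidx]; omega
    rw [heq n, List.getD_append_right _ _ _ _ (le_of_eq hidxeq.symm)] at hFk
    rw [hidxeq, Nat.sub_self, List.getD_cons_zero] at hFk
    rw [hidxeq, hFk]
    exact hw n
  rcases lt_trichotomy p₀ p with h | h | h
  · have hsub : {k | ω (F k) = p₀} ⊆ Set.Iio (g 0).length := by
      intro k hk
      by_contra hc
      have := hhigh k (not_lt.1 hc)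
      have : p ≤ p₀ := le_trans this (le_of_eq hk)
      omega
    exact hp₀i (Set.Finite.subset (Set.finite_Iio _) hsub)
  · exact hp (h ▸ hp₀e)
  · exact hinf (hp₀f p h)

theorem rank_le_of_sub {α : Type u} {r : α → α → Prop} (hwf : WellFounded r) {a b : α}
    (hsub : ∀ x, r x a → r x b) : (hwf.apply a).rank ≤ (hwf.apply b).rank := by
  rw [Acc.rank_eq]
  apply Ordinal.iSup_le
  intro x
  rw [Order.succ_le_iff]
  have h1 := Acc.rank_lt_of_rel (hwf.apply b) (hsub x.1 x.2)
  have he : ((hwf.apply a).inv x.2).rank = ((hwf.apply b).inv (hsub x.1 x.2)).rank :=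
    congrArg Acc.rank (Subsingleton.elim _ _)
  rw [he]
  exact h1

noncomputable def rnk (hwin : WinningFrom Vd E ω σ v) (p : ℕ) (m : List V) : Ordinal.{u} :=
  if h : Even p then 0 else ((hrel_wf Vd E σ v ω hwin h).apply m).rank

theorem rnk_le_step (hwin : WinningFrom Vd E ω σ v) {m : List V} {w : V}
    (hm : Hist Vd E σ v m) (hmw : Hist Vd E σ v (m ++ [w])) {p : ℕ} (hpw : p ≤ ω w) :
    rnk Vd E σ v ω hwin p (m ++ [w]) ≤ rnk Vd E σ v ω hwin p m := by
  unfold rnk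
  split_ifs with h
  · exact le_refl _
  · apply rank_le_of_sub (hrel_wf Vd E σ v ω hwin h)
    rintro x ⟨-, hx, t, w2, hxeq, hw2, hall⟩
    refine ⟨hm, hx, [w] ++ t, w2, ?_, hw2, ?_⟩
    · rw [hxeq]; simp [List.append_assoc]
    · intro a ha
      rcases List.mem_append.1 ha with ha | ha
      · simp only [List.mem_cons, List.not_mem_nil, or_false] at ha
        rw [ha]; exact hpw
      · exact hall a ha

theorem rnk_lt_step (hwin : WinningFrom Vd E ω σ v) {m : List V} {w : V}
    (hm : Hist Vd E σ v m) (hmw : Hist Vd E σ v (m ++ [w])) (ho : ¬ Even (ω w)) :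
    rnk Vd E σ v ω hwin (ω w) (m ++ [w]) < rnk Vd E σ v ω hwin (ω w) m := by
  unfold rnk
  rw [dif_neg ho, dif_neg ho]
  have hrel : HRel Vd E σ v ω (ω w) (m ++ [w]) m :=
    ⟨hm, hmw, [], w, by simp, rfl, by simp⟩
  have h1 := Acc.rank_lt_of_rel ((hrel_wf Vd E σ v ω hwin ho).apply m) hrel
  have he : (((hrel_wf Vd E σ v ω hwin ho).apply m).inv hrel).rank =
      ((hrel_wf Vd E σ v ω hwin ho).apply (m ++ [w])).rank :=
    congrArg Acc.rank (Subsingleton.elim _ _)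
  rw [he] at h1
  exact h1

noncomputable def mu (hwin : WinningFrom Vd E ω σ v) (d : ℕ) (m : List V) :
    Fin (d + 1) → Ordinal.{u} :=
  fun i => rnk Vd E σ v ω hwin i m

def trunc (d q : ℕ) (x : Fin (d + 1) → Ordinal.{u}) : Fin (d + 1) → Ordinal.{u} :=
  fun i => if (i : ℕ) ≤ q then x i else 0

theorem trunc_trunc (d : ℕ) {p q : ℕ} (hpq : p ≤ q) (x : Fin (d + 1) → Ordinal.{u}) :
    trunc d p (trunc d q x) = trunc d p x := by
  funext i
  simp only [trunc]
  by_cases h : (i : ℕ) ≤ p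
  · rw [if_pos h, if_pos h, if_pos (h.trans hpq)]
  · rw [if_neg h, if_neg h]

theorem toLex_le_of_forall_le {d : ℕ} {x y : Fin (d + 1) → Ordinal.{u}}
    (h : ∀ i, x i ≤ y i) : toLex x ≤ toLex y :=
  Pi.toLex_monotone (ι := Fin (d + 1)) (β := fun _ => Ordinal.{u}) h

theorem toLex_lt_of_forall_le {d : ℕ} {x y : Fin (d + 1) → Ordinal.{u}}
    (h : ∀ i, x i ≤ y i) (i₀ : Fin (d + 1)) (hi₀ : x i₀ < y i₀) :
    toLex x < toLex y :=
  Pi.toLex_strictMono (ι := Fin (d + 1)) (β := fun _ => Ordinal.{u}) (Pi.lt_def.2 ⟨h, i₀, hi₀⟩)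

theorem toLex_trunc_mono {d q : ℕ} {x y : Fin (d + 1) → Ordinal.{u}}
    (h : toLex x ≤ toLex y) : toLex (trunc d q x) ≤ toLex (trunc d q y) := by
  rcases eq_or_lt_of_le h with he | hlt
  · have : x = y := toLex.injective he
    rw [this]
  · have hlt' : Pi.Lex (· < ·) (fun {_} => (· < ·)) x y := hlt
    obtain ⟨i, hji, hi⟩ := hlt'
    by_cases hiq : (i : ℕ) ≤ q
    · apply le_of_lt
      show Pi.Lex (· < ·) (fun {_} => (· < ·)) (trunc d q x) (trunc d q y)
      refine ⟨i, ?_, ?_⟩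
      · intro j hj
        simp only [trunc]
        split_ifs with h'
        · exact hji j hj
        · rfl
      · simp only [trunc, if_pos hiq]
        exact hi
    · apply le_of_eq
      apply congrArg toLex
      funext j
      simp only [trunc]
      split_ifs with h'
      · exact hji j (show (j : ℕ) < (i : ℕ) by omega)
      · rfl

def Reach (u : V) : Prop := ∃ l, Hist Vd E σ v (l ++ [u])

theorem exists_best (hwin : WinningFrom Vd E ω σ v) (d : ℕ) {u : V}
    (h : Reach Vd E σ v u) :
    ∃ m, Hist Vd E σ v (m ++ [u]) ∧
      ∀ l, Hist Vd E σ v (l ++ [u]) →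
        toLex (mu Vd E σ v ω hwin d (m ++ [u])) ≤ toLex (mu Vd E σ v ω hwin d (l ++ [u])) := by
  classical
  obtain ⟨l0, hl0⟩ := h
  set A : Set (Lex (Fin (d + 1) → Ordinal.{u})) :=
    {o | ∃ l, Hist Vd E σ v (l ++ [u]) ∧ toLex (mu Vd E σ v ω hwin d (l ++ [u])) = o} with hA
  have hAne : A.Nonempty := ⟨_, l0, hl0, rfl⟩
  have hwf : WellFounded ((· < ·) : Lex (Fin (d + 1) → Ordinal.{u}) →
      Lex (Fin (d + 1) → Ordinal.{u}) → Prop) := IsWellFounded.wf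
  obtain ⟨o, ⟨m, hm, hmo⟩, hmin⟩ := hwf.has_min A hAne
  refine ⟨m, hm, fun l hl => ?_⟩
  rw [hmo]
  have htri : IsTrichotomous (Fin (d + 1) → Ordinal.{u})
      (Pi.Lex (· < ·) (fun {_} => (· < ·))) :=
    Pi.isTrichotomous_lex _ _ (Finite.to_wellFoundedLT (α := Fin (d + 1))).wf
  have h3 := htri.trichotomous (a := ofLex (toLex (mu Vd E σ v ω hwin d (l ++ [u]))))
    (b := ofLex o)
  rcases (or_iff_not_imp_left.2 fun h1 => or_iff_not_imp_right.2 fun h2 => h3 h1 h2) with hzo | heqz | hoz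
  · exact absurd (show toLex (mu Vd E σ v ω hwin d (l ++ [u])) < o from hzo)
      (hmin _ ⟨l, hl, rfl⟩)
  · exact le_of_eq (congrArg toLex heqz).symm
  · exact le_of_lt hoz

open Classical in
noncomputable def best (hwin : WinningFrom Vd E ω σ v) (d : ℕ) (u : V) : List V :=
  if h : Reach Vd E σ v u then Classical.choose (exists_best Vd E σ v ω hwin d h) else []

theorem best_spec (hwin : WinningFrom Vd E ω σ v) (d : ℕ) {u : V}
    (h : Reach Vd E σ v u) :
    Hist Vd E σ v (best Vd E σ v ω hwin d u ++ [u]) ∧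
      ∀ l, Hist Vd E σ v (l ++ [u]) →
        toLex (mu Vd E σ v ω hwin d (best Vd E σ v ω hwin d u ++ [u])) ≤
          toLex (mu Vd E σ v ω hwin d (l ++ [u])) := by
  unfold best
  rw [dif_pos h]
  exact Classical.choose_spec (exists_best Vd E σ v ω hwin d h)

end PPDAux


/-- Positional determinacy (transfer direction): if Player ◇ has a winning
strategy from `v` in a parity game with finitely many priorities, then she has a
positional winning strategy from `v`, i.e. one whose moves depend only on the
current node. -/
theorem parity_positional_determinacy {V : Type*} (Vd : Set V)
    (E : V → V → Prop) (ω : V → ℕ) (hω : (Set.range ω).Finite)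
    (σ : List V → V) (v : V) (hwin : WinningFrom Vd E ω σ v) :
    ∃ σ' : List V → V, WinningFrom Vd E ω σ' v ∧
      ∀ (l l' : List V) (u : V), σ' (l ++ [u]) = σ' (l' ++ [u]) := by
  classical
  obtain ⟨d, hd⟩ : ∃ d : ℕ, ∀ x, ω x ≤ d := by
    obtain ⟨b, hb⟩ := hω.bddAbove
    exact ⟨b, fun x => hb ⟨x, rfl⟩⟩
  set bst : V → List V := fun u => PPDAux.best Vd E σ v ω hwin d u with hbst
  set M : List V → Fin (d + 1) → Ordinal := fun m => PPDAux.mu Vd E σ v ω hwin d m with hM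
  set σ' : List V → V := fun l => σ (bst (l.getLastD v) ++ [l.getLastD v]) with hσ'
  have hσ'app : ∀ (l : List V) (u : V), σ' (l ++ [u]) = σ (bst u ++ [u]) := by
    intro l u
    show σ (bst ((l ++ [u]).getLastD v) ++ [(l ++ [u]).getLastD v]) = σ (bst u ++ [u])
    rw [List.getLastD_concat]
  have key : ∀ {u w : V}, PPDAux.Reach Vd E σ v u → E u w →
      (u ∈ Vd → w = σ (bst u ++ [u])) → Hist Vd E σ v (bst u ++ [u] ++ [w]) := by
    intro u w hu hE hV
    exact Hist.step (PPDAux.best_spec Vd E σ v ω hwin d hu).1 hE hV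
  have reach' : ∀ {m : List V}, Hist Vd E σ' v m → ∀ l u, m = l ++ [u] →
      PPDAux.Reach Vd E σ v u := by
    intro m hm
    induction hm with
    | base =>
      intro l u he
      have h1 : u = v := by
        have := congrArg List.getLast? he
        rw [List.getLast?_concat] at this
        simp only [List.getLast?_singleton, Option.some.injEq] at this
        exact this.symm
      subst h1
      exact ⟨[], Hist.base⟩
    | step h1 h2 h3 ih =>
      rename_i l1 u1 w1
      intro l u he
      have hu1 : PPDAux.Reach Vd E σ v u1 := ih l1 u1 rfl
      have huw : u = w1 := by
        have := congrArg List.getLast? he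
        rw [List.getLast?_concat, List.getLast?_concat] at this
        simp only [Option.some.injEq] at this
        exact this.symm
      subst huw
      refine ⟨_, key hu1 h2 ?_⟩
      intro hV
      rw [h3 hV]
      exact hσ'app l1 u1
  refine ⟨σ', ⟨?_, ?_⟩, ?_⟩
  · -- finite maximal plays end with opponent stuck
    intro l u hist hnoext
    intro huVd
    have hu : PPDAux.Reach Vd E σ v u := reach' hist l u rfl
    obtain ⟨hbh, hbmin⟩ := PPDAux.best_spec Vd E σ v ω hwin d hu
    have hex : ∃ w, Hist Vd E σ v (bst u ++ [u] ++ [w]) := by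
      by_contra hno
      push_neg at hno
      exact hwin.1 (bst u) u hbh hno huVd
    obtain ⟨w, hw⟩ := hex
    obtain ⟨-, hE, hV⟩ := PPDAux.hist_inv Vd E σ v hw (bst u) u w rfl
    refine hnoext w (Hist.step hist hE ?_)
    intro _
    rw [hσ'app l u]
    exact hV huVd
  · -- infinite plays satisfy the parity condition
    intro f hf0 hpref
    have hsnoc : ∀ n : ℕ, (List.ofFn fun i : Fin (n + 1) => f i) =
        (List.ofFn fun i : Fin n => f i) ++ [f n] := by
      intro n
      rw [List.ofFn_succ']
      simp [List.concat_eq_append]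
    have hreach : ∀ n, PPDAux.Reach Vd E σ v (f n) := fun n =>
      reach' (hpref n) _ _ (hsnoc n)
    have hstep2 : ∀ n, E (f n) (f (n + 1)) ∧
        (f n ∈ Vd → f (n + 1) = σ' ((List.ofFn fun i : Fin n => f i) ++ [f n])) := by
      intro n
      have h2 := hpref (n + 1)
      rw [hsnoc (n + 1), hsnoc n] at h2
      obtain ⟨-, hE, hV⟩ := PPDAux.hist_inv Vd E σ' v h2 _ _ _ rfl
      exact ⟨hE, hV⟩
    have hBstep : ∀ n, Hist Vd E σ v (bst (f n) ++ [f n] ++ [f (n + 1)]) := by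
      intro n
      refine key (hreach n) (hstep2 n).1 ?_
      intro hV
      rw [(hstep2 n).2 hV]
      exact hσ'app _ _
    have hBh : ∀ n, Hist Vd E σ v (bst (f n) ++ [f n]) := fun n =>
      (PPDAux.best_spec Vd E σ v ω hwin d (hreach n)).1
    have hmin : ∀ n (l : List V), Hist Vd E σ v (l ++ [f n]) →
        toLex (M (bst (f n) ++ [f n])) ≤ toLex (M (l ++ [f n])) := fun n =>
      (PPDAux.best_spec Vd E σ v ω hwin d (hreach n)).2
    have hcomp : ∀ n (i : Fin (d + 1)), (i : ℕ) ≤ ω (f (n + 1)) →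
        M (bst (f n) ++ [f n] ++ [f (n + 1)]) i ≤ M (bst (f n) ++ [f n]) i := by
      intro n i hi
      exact PPDAux.rnk_le_step Vd E σ v ω hwin (hBh n) (hBstep n) hi
    have hmono : ∀ n, toLex (PPDAux.trunc d (ω (f (n + 1))) (M (bst (f (n + 1)) ++ [f (n + 1)]))) ≤
        toLex (PPDAux.trunc d (ω (f (n + 1))) (M (bst (f n) ++ [f n]))) := by
      intro n
      have h1 : toLex (M (bst (f (n + 1)) ++ [f (n + 1)])) ≤
          toLex (M (bst (f n) ++ [f n] ++ [f (n + 1)])) :=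
        hmin (n + 1) (bst (f n) ++ [f n]) (hBstep n)
      refine le_trans (PPDAux.toLex_trunc_mono h1) ?_
      apply PPDAux.toLex_le_of_forall_le
      intro i
      simp only [PPDAux.trunc]
      split_ifs with hi
      · exact hcomp n i hi
      · exact le_refl _
    have hstrict : ∀ n, ¬ Even (ω (f (n + 1))) →
        toLex (PPDAux.trunc d (ω (f (n + 1))) (M (bst (f (n + 1)) ++ [f (n + 1)]))) <
        toLex (PPDAux.trunc d (ω (f (n + 1))) (M (bst (f n) ++ [f n]))) := by
      intro n ho
      have h1 : toLex (M (bst (f (n + 1)) ++ [f (n + 1)])) ≤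
          toLex (M (bst (f n) ++ [f n] ++ [f (n + 1)])) :=
        hmin (n + 1) (bst (f n) ++ [f n]) (hBstep n)
      refine lt_of_le_of_lt (PPDAux.toLex_trunc_mono h1) ?_
      have hωd : ω (f (n + 1)) ≤ d := hd _
      refine PPDAux.toLex_lt_of_forall_le ?_ ⟨ω (f (n + 1)), by omega⟩ ?_
      · intro i
        simp only [PPDAux.trunc]
        split_ifs with hi
        · exact hcomp n i hi
        · exact le_refl _
      · simp only [PPDAux.trunc]
        rw [if_pos (by simp : ((⟨ω (f (n + 1)), by omega⟩ : Fin (d + 1)) : ℕ) ≤ ω (f (n + 1)))]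
        rw [if_pos (le_refl (ω (f (n + 1))))]
        exact PPDAux.rnk_lt_step Vd E σ v ω hwin (hBh n) (hBstep n) ho
    -- choose the least priority occurring infinitely often
    have hIne : ∃ p, {n | ω (f n) = p}.Infinite := by
      by_contra hno
      push_neg at hno
      have hcov : (Set.univ : Set ℕ) ⊆ ⋃ q ∈ Set.range ω, {n | ω (f n) = q} := by
        intro n _
        simp only [Set.mem_iUnion]
        exact ⟨ω (f n), ⟨f n, rfl⟩, rfl⟩
      have hfin : (Set.univ : Set ℕ).Finite :=
        Set.Finite.subset (Set.Finite.biUnion hω fun q _ => hno q) hcov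
      exact Set.infinite_univ hfin
    have hpI : {n | ω (f n) = Nat.find hIne}.Infinite := Nat.find_spec hIne
    have hqfin : ∀ q, q < Nat.find hIne → {n | ω (f n) = q}.Finite :=
      fun q hq => Set.not_infinite.1 (Nat.find_min hIne hq)
    refine ⟨Nat.find hIne, ?_, hpI, hqfin⟩
    set p := Nat.find hIne with hpdef
    by_contra hodd
    -- bad positions (priority < p) are finitely many
    have hBadfin : {m | ω (f m) < p}.Finite := by
      have hsub : {m | ω (f m) < p} ⊆ ⋃ q ∈ Finset.range p, {n | ω (f n) = q} := by
        intro m hm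
        simp only [Set.mem_iUnion]
        exact ⟨ω (f m), Finset.mem_range.2 hm, rfl⟩
      exact Set.Finite.subset
        (Set.Finite.biUnion (Finset.range p).finite_toSet fun q hq =>
          hqfin q (Finset.mem_range.1 hq)) hsub
    obtain ⟨N, hN⟩ : ∃ N, ∀ m, N ≤ m → p ≤ ω (f m) := by
      obtain ⟨Nb, hNb⟩ := hBadfin.bddAbove
      refine ⟨Nb + 1, fun m hm => ?_⟩
      by_contra hc
      push_neg at hc
      have := hNb (show m ∈ {m | ω (f m) < p} from hc)
      omega
    set a : ℕ → Lex (Fin (d + 1) → Ordinal) :=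
      fun n => toLex (PPDAux.trunc d p (M (bst (f n) ++ [f n]))) with ha
    have haproj : ∀ n, p ≤ ω (f (n + 1)) → a (n + 1) ≤ a n := by
      intro n hp'
      have h2 := PPDAux.toLex_trunc_mono (q := p) (hmono n)
      rwa [PPDAux.trunc_trunc d hp', PPDAux.trunc_trunc d hp'] at h2
    have hastrict : ∀ n, ω (f (n + 1)) = p → a (n + 1) < a n := by
      intro n hp'
      have h2 := hstrict n (by rw [hp']; exact hodd)
      rw [hp'] at h2
      exact h2
    have hchain : ∀ m n, N ≤ m → m ≤ n → a n ≤ a m := by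
      intro m n hm hmn
      induction n, hmn using Nat.le_induction with
      | base => exact le_refl _
      | succ n hmn ih =>
        exact le_trans (haproj n (hN (n + 1) (by omega))) ih
    have hsinf : {n | ω (f (n + 1)) = p}.Infinite := by
      by_contra hfin
      rw [Set.not_infinite] at hfin
      have hsub : {n | ω (f n) = p} ⊆
          Set.Iic 0 ∪ (fun n => n + 1) '' {n | ω (f (n + 1)) = p} := by
        intro m hm
        cases m with
        | zero => exact Or.inl (le_refl 0)
        | succ k => exact Or.inr ⟨k, hm, rfl⟩
      exact hpI (Set.Finite.subset (Set.Finite.union (Set.finite_Iic 0) (hfin.image _)) hsub)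
    have hwflex : WellFounded ((· < ·) : Lex (Fin (d + 1) → Ordinal) →
        Lex (Fin (d + 1) → Ordinal) → Prop) := IsWellFounded.wf
    obtain ⟨x, ⟨n₀, hn₀, rfl⟩, hminx⟩ :=
      hwflex.has_min (a '' Set.Ici N) ⟨a N, N, le_refl N, rfl⟩
    obtain ⟨n₁, hn₁mem, hn₁ge⟩ : ∃ n₁, ω (f (n₁ + 1)) = p ∧ n₀ ≤ n₁ := by
      by_contra hc
      push_neg at hc
      exact hsinf (Set.Finite.subset (Set.finite_Iio n₀) fun n hn => hc n hn)
    have h5 : a (n₁ + 1) < a n₀ :=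
      lt_of_lt_of_le (hastrict n₁ hn₁mem) (hchain n₀ n₁ hn₀ hn₁ge)
    have h6 : N ≤ n₀ := hn₀
    exact hminx (a (n₁ + 1)) ⟨n₁ + 1, Set.mem_Ici.2 (by omega), rfl⟩ h5
  · -- positionality
    intro l l' u
    show σ (bst ((l ++ [u]).getLastD v) ++ [(l ++ [u]).getLastD v]) =
      σ (bst ((l' ++ [u]).getLastD v) ++ [(l' ++ [u]).getLastD v])
    rw [List.getLastD_concat, List.getLastD_concat]
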